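/- Let l ≥ 1, m_1,…,m_l ∈ ℝ with m_l ≠ 0, and let x < 0 be such that the generalized harmonic polylogarithm H_{m_1,…,m_l}(−x) is defined. Then H_{m_1,…,m_l}(−x) = (−1)^{l−k} · H_{−m_1,…,−m_l}(x), where k denotes the number of indices m_i that equal zero and H_{−m_1,…,−m_l}(x) is defined by the same iterated-integral recursion with oriented integrals from 0 to the (negative) argument x. -/

import Mathlib

open scoped Classical
open MeasureTheory intervalIntegral Filter

/-- The weight-one integrand: `f_0(x) = 1/x` and `f_a(x) = 1/(|a| − sign(a)·x)` for `a ≠ 0`. -/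
noncomputable def GHf (a x : ℝ) : ℝ :=
  if a = 0 then 1 / x else 1 / (|a| - Real.sign a * x)

/-- The generalized harmonic polylogarithm `H_{m₁,…,m_w}(x)`: `1` for the empty word,
`(log x)^w / w!` for the all-zero word (note `Real.log` of a negative number equals the
log of its absolute value), and otherwise the oriented iterated integral
`∫_0^x f_{m₁}(y) H_{m₂,…,m_w}(y) dy`. -/
noncomputable def GH : List ℝ → ℝ → ℝ
  | [], _ => 1
  | m :: p, x =>
    if m = 0 ∧ ∀ y ∈ p, y = (0:ℝ) then
      Real.log x ^ (p.length + 1) / ((p.length + 1).factorial : ℝ)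
    else ∫ y in (0:ℝ)..x, GHf m y * GH p y

/-- `GHDef m⃗ x` states that the generalized harmonic polylogarithm `H_{m⃗}(x)` is
defined, i.e. all occurring iterated integrals converge. -/
def GHDef : List ℝ → ℝ → Prop
  | [], _ => True
  | m :: p, x =>
    (m = 0 ∧ ∀ y ∈ p, y = (0:ℝ)) ∨
    ((∀ y ∈ Set.uIoc (0:ℝ) x, GHDef p y) ∧
      IntervalIntegrable (fun y => GHf m y * GH p y) MeasureTheory.volume 0 x)

/-- The number of indices equal to zero in a word. -/
noncomputable def zeroCount (ms : List ℝ) : ℕ :=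
  (ms.map (fun m => if m = 0 then 1 else 0)).sum

/-- Argument reflection `−x → x` for `x < 0` and words with `m_l ≠ 0`:
`H_{m₁,…,m_l}(−x) = (−1)^{l−k} · H_{−m₁,…,−m_l}(x)`, where `k` is the number of
indices `m_i` equal to zero (the right-hand side being given by the same
iterated-integral recursion with oriented integrals from `0` to the negative
argument `x`). -/
lemma GHf_neg (m t : ℝ) : GHf m (-t) = (if m = 0 then (-1:ℝ) else 1) * GHf (-m) t := by
  by_cases hm : m = 0
  · subst hm; simp [GHf, div_neg]
  · have hm' : (-m) ≠ 0 := neg_ne_zero.mpr hm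
    simp only [GHf, if_neg hm, if_neg hm', abs_neg, Real.sign_neg, hm, hm']
    ring_nf
    simp

lemma integral_reflect (x : ℝ) (F : ℝ → ℝ) :
    (∫ y in (0:ℝ)..(-x), F y) = -∫ t in (0:ℝ)..x, F (-t) := by
  have h := intervalIntegral.integral_comp_neg (a := (0:ℝ)) (b := x) (f := F)
  rw [neg_zero] at h
  rw [h, intervalIntegral.integral_symm]

lemma zeroCount_cons (m : ℝ) (p : List ℝ) :
    zeroCount (m :: p) = (if m = 0 then 1 else 0) + zeroCount p := by
  simp [zeroCount]

lemma zeroCount_le (p : List ℝ) : zeroCount p ≤ p.length := by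
  induction p with
  | nil => simp [zeroCount]
  | cons m p ih =>
    rw [zeroCount_cons]
    simp only [List.length_cons]
    split <;> omega

lemma GH_cons_of_not {m : ℝ} {p : List ℝ} (hc : ¬(m = 0 ∧ ∀ y ∈ p, y = (0:ℝ))) (x : ℝ) :
    GH (m :: p) x = ∫ y in (0:ℝ)..x, GHf m y * GH p y := by
  rw [GH, if_neg hc]

lemma gh_reflect_aux : ∀ (p : List ℝ) (m : ℝ),
    (m :: p).getLast (List.cons_ne_nil m p) ≠ 0 →
    ∀ x : ℝ, x < 0 → GHDef (m :: p) (-x) →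
    GH (m :: p) (-x) =
      (-1 : ℝ) ^ ((m :: p).length - zeroCount (m :: p)) *
        GH ((m :: p).map (fun a => -a)) x := by
  intro p
  induction p with
  | nil =>
    intro m hlast x hx _
    have hm : m ≠ 0 := by simpa using hlast
    have hm' : (-m) ≠ 0 := neg_ne_zero.mpr hm
    have hc : ¬(m = 0 ∧ ∀ y ∈ ([] : List ℝ), y = (0:ℝ)) := by simp [hm]
    have hc' : ¬((-m) = 0 ∧ ∀ y ∈ ([] : List ℝ), y = (0:ℝ)) := by simp [hm']
    rw [GH_cons_of_not hc]
    simp only [List.map_cons, List.map_nil]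
    rw [GH_cons_of_not hc']
    rw [integral_reflect]
    have hE : zeroCount [m] = 0 := by simp [zeroCount, hm]
    rw [hE]
    simp only [List.length_singleton, Nat.sub_zero, pow_one]
    rw [show (∫ t in (0:ℝ)..x, GHf m (-t) * GH [] (-t)) =
        ∫ t in (0:ℝ)..x, GHf (-m) t * GH [] t from ?_]
    · ring
    · apply intervalIntegral.integral_congr
      intro t _
      simp only [GHf_neg, if_neg hm, GH, one_mul]
  | cons m' p' ih =>
    intro m hlast x hx hdef
    set p := m' :: p' with hp
    have hpne : p ≠ [] := by simp [hp]
    have hlastp : p.getLast hpne ≠ 0 := by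
      rwa [List.getLast_cons hpne] at hlast
    have hnotall : ¬ (∀ y ∈ p, y = (0:ℝ)) := fun hall =>
      hlastp (hall _ (List.getLast_mem hpne))
    have hc : ¬(m = 0 ∧ ∀ y ∈ p, y = (0:ℝ)) := fun ⟨_, h2⟩ => hnotall h2
    have hnotall' : ¬ (∀ y ∈ p.map (fun a => -a), y = (0:ℝ)) := by
      intro hall
      apply hlastp
      have := hall (-(p.getLast hpne)) (List.mem_map_of_mem (f := fun a => -a) (List.getLast_mem hpne))
      linarith [this]
    have hc' : ¬((-m) = 0 ∧ ∀ y ∈ p.map (fun a => -a), y = (0:ℝ)) :=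
      fun ⟨_, h2⟩ => hnotall' h2
    -- extract GHDef info
    have hdef' : (∀ y ∈ Set.uIoc (0:ℝ) (-x), GHDef p y) := by
      rcases hdef with h | h
      · exact absurd h hc
      · exact h.1
    rw [GH_cons_of_not hc]
    simp only [List.map_cons]
    rw [GH_cons_of_not hc']
    rw [integral_reflect]
    have huIoc : Set.uIoc (0:ℝ) (-x) = Set.Ioc (0:ℝ) (-x) := by
      rw [Set.uIoc_of_le (by linarith)]
    have hcong : (∫ t in (0:ℝ)..x, GHf m (-t) * GH p (-t)) =
        ((if m = 0 then (-1:ℝ) else 1) * (-1:ℝ) ^ (p.length - zeroCount p)) *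
          ∫ t in (0:ℝ)..x, GHf (-m) t * GH (p.map (fun a => -a)) t := by
      rw [← intervalIntegral.integral_const_mul]
      apply intervalIntegral.integral_congr_ae
      have h0 : ∀ᵐ (t : ℝ) ∂volume, t ≠ 0 := by
        rw [MeasureTheory.ae_iff]
        simpa using Real.volume_singleton (a := (0:ℝ))
      filter_upwards [h0] with t ht0 htmem
      have htI : t ∈ Set.Ioc x 0 := by
        rwa [Set.uIoc_of_ge (le_of_lt hx)] at htmem
      have htneg : t < 0 := lt_of_le_of_ne htI.2 ht0
      have hmem : -t ∈ Set.uIoc (0:ℝ) (-x) := by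
        rw [huIoc]
        constructor <;> [linarith [htneg]; linarith [htI.1]]
      have hIH := ih m' (by simp [hp] at hlastp; exact hlastp) t htneg ?_
      · have h1 : GH p (-t) = (-1:ℝ) ^ (p.length - zeroCount p) *
            GH (p.map (fun a => -a)) t := by
          simpa [hp] using hIH
        rw [GHf_neg, h1]
        ring
      · have := hdef' (-t) hmem
        simpa [hp] using this
    have hle := zeroCount_le p
    by_cases hm : m = 0
    · have hE : (m :: p).length - zeroCount (m :: p) = p.length - zeroCount p := by
        simp only [List.length_cons, zeroCount_cons, if_pos hm]
        omega
      rw [hcong, if_pos hm, hE]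
      ring
    · have hE : (m :: p).length - zeroCount (m :: p) = (p.length - zeroCount p) + 1 := by
        simp only [List.length_cons, zeroCount_cons, if_neg hm]
        omega
      rw [hcong, if_neg hm, hE, pow_succ]
      ring

theorem gh_reflection (ms : List ℝ) (h : ms ≠ []) (hlast : ms.getLast h ≠ 0)
    (x : ℝ) (hx : x < 0) (hdef : GHDef ms (-x)) :
    GH ms (-x) =
      (-1 : ℝ) ^ (ms.length - zeroCount ms) * GH (ms.map (fun m => -m)) x := by
  cases ms with
  | nil => exact absurd rfl h
  | cons m p => exact gh_reflect_aux p m hlast x hx hdef
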